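/- Combined leakage bound: let p be a random variable (user representation), g a deterministic function, v̂ = g(p) the predicted outcome, v the true outcome, and d any user attribute. If I(v; v̂) > H(v | d) then I(p; d) ≥ I(v̂; d) > 0. -/

import Mathlib

open Finset

variable {Ω : Type*} [Fintype Ω]

/-- Probability that random variable `X` takes value `s`, under mass function `μ`. -/
noncomputable def probOf (μ : Ω → ℝ) {S : Type*} [DecidableEq S] (X : Ω → S) (s : S) : ℝ :=
  ∑ ω ∈ Finset.univ.filter fun ω => X ω = s, μ ω

/-- `μ` is a probability mass function on the finite sample space `Ω`. -/
def IsProbMass (μ : Ω → ℝ) : Prop := (∀ ω, 0 ≤ μ ω) ∧ ∑ ω, μ ω = 1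

/-- Shannon entropy of a finitely supported random variable. -/
noncomputable def entropy (μ : Ω → ℝ) {S : Type*} [Fintype S] [DecidableEq S]
    (X : Ω → S) : ℝ :=
  ∑ s : S, Real.negMulLog (probOf μ X s)

/-- Conditional Shannon entropy `H(X | Y) = H(X, Y) - H(Y)`. -/
noncomputable def condEntropy (μ : Ω → ℝ) {S T : Type*} [Fintype S] [DecidableEq S]
    [Fintype T] [DecidableEq T] (X : Ω → S) (Y : Ω → T) : ℝ :=
  entropy μ (fun ω => (X ω, Y ω)) - entropy μ Y

/-- Mutual information `I(X; Y) = H(X) + H(Y) - H(X, Y)`. -/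
noncomputable def mutualInfo (μ : Ω → ℝ) {S T : Type*} [Fintype S] [DecidableEq S]
    [Fintype T] [DecidableEq T] (X : Ω → S) (Y : Ω → T) : ℝ :=
  entropy μ X + entropy μ Y - entropy μ (fun ω => (X ω, Y ω))

/-- Conditional mutual information `I(X; Y | Z) = H(X,Z) + H(Y,Z) - H(X,Y,Z) - H(Z)`. -/
noncomputable def condMutualInfo (μ : Ω → ℝ) {S T U : Type*} [Fintype S] [DecidableEq S]
    [Fintype T] [DecidableEq T] [Fintype U] [DecidableEq U]
    (X : Ω → S) (Y : Ω → T) (Z : Ω → U) : ℝ :=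
  entropy μ (fun ω => (X ω, Z ω)) + entropy μ (fun ω => (Y ω, Z ω))
    - entropy μ (fun ω => (X ω, Y ω, Z ω)) - entropy μ Z

/-- Independence of two random variables: the joint distribution factorizes. -/
def IndepRV (μ : Ω → ℝ) {S T : Type*} [DecidableEq S] [DecidableEq T]
    (X : Ω → S) (Y : Ω → T) : Prop :=
  ∀ s t, probOf μ (fun ω => (X ω, Y ω)) (s, t) = probOf μ X s * probOf μ Y t

lemma probOf_nonneg (μ : Ω → ℝ) (hμ0 : ∀ ω, 0 ≤ μ ω) {S : Type*} [DecidableEq S]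
    (X : Ω → S) (s : S) : 0 ≤ probOf μ X s :=
  Finset.sum_nonneg fun ω _ => hμ0 ω

lemma probOf_eq_sum_ite (μ : Ω → ℝ) {S : Type*} [DecidableEq S] (X : Ω → S) (s : S) :
    probOf μ X s = ∑ ω, if X ω = s then μ ω else 0 := by
  rw [probOf, Finset.sum_filter]

lemma entropy_comp_inj (μ : Ω → ℝ) {S T : Type*} [Fintype S] [DecidableEq S]
    [Fintype T] [DecidableEq T] (X : Ω → S) (f : S → T) (hf : Function.Injective f) :
    entropy μ (fun ω => f (X ω)) = entropy μ X := by
  have h1 : ∀ s, probOf μ (fun ω => f (X ω)) (f s) = probOf μ X s := by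
    intro s; unfold probOf; congr 1; ext ω; simp [hf.eq_iff]
  have h2 : ∀ t, t ∉ Finset.univ.image f → probOf μ (fun ω => f (X ω)) t = 0 := by
    intro t ht
    rw [probOf]
    have he : Finset.univ.filter (fun ω => f (X ω) = t) = ∅ := by
      refine Finset.filter_eq_empty_iff.mpr fun ω _ h => ht ?_
      simp [← h]
    rw [he, Finset.sum_empty]
  calc entropy μ (fun ω => f (X ω))
      = ∑ t ∈ Finset.univ.image f, Real.negMulLog (probOf μ (fun ω => f (X ω)) t) := by
        refine (Finset.sum_subset (Finset.subset_univ _) ?_).symm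
        intro t _ ht; rw [h2 t ht, Real.negMulLog_zero]
    _ = ∑ s, Real.negMulLog (probOf μ (fun ω => f (X ω)) (f s)) :=
        Finset.sum_image (fun a _ b _ h => hf h)
    _ = entropy μ X := by unfold entropy; exact Finset.sum_congr rfl fun s _ => by rw [h1]

set_option linter.unusedSectionVars false
section Marg
variable (μ : Ω → ℝ) {S T U : Type*} [Fintype S] [DecidableEq S]
    [Fintype T] [DecidableEq T] [Fintype U] [DecidableEq U]
    (X : Ω → S) (Y : Ω → T) (Z : Ω → U)

lemma marg_snd (t : T) :
    probOf μ Y t = ∑ s, probOf μ (fun ω => (X ω, Y ω)) (s, t) := by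
  simp only [probOf_eq_sum_ite]
  rw [Finset.sum_comm]
  refine Finset.sum_congr rfl fun ω _ => ?_
  by_cases hY : Y ω = t <;> simp [Prod.ext_iff, hY]

lemma marg_AC (a : S) (c : U) :
    probOf μ (fun ω => (X ω, Z ω)) (a, c)
      = ∑ b, probOf μ (fun ω => (X ω, Y ω, Z ω)) (a, b, c) := by
  simp only [probOf_eq_sum_ite]
  rw [Finset.sum_comm]
  refine Finset.sum_congr rfl fun ω _ => ?_
  by_cases hX : X ω = a <;> by_cases hZ : Z ω = c <;> simp [Prod.ext_iff, hX, hZ]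

lemma marg_BC (b : T) (c : U) :
    probOf μ (fun ω => (Y ω, Z ω)) (b, c)
      = ∑ a, probOf μ (fun ω => (X ω, Y ω, Z ω)) (a, b, c) := by
  simp only [probOf_eq_sum_ite]
  rw [Finset.sum_comm]
  refine Finset.sum_congr rfl fun ω _ => ?_
  by_cases hY : Y ω = b <;> by_cases hZ : Z ω = c <;> simp [Prod.ext_iff, hY, hZ]

lemma marg_C (c : U) :
    probOf μ Z c = ∑ a, ∑ b, probOf μ (fun ω => (X ω, Y ω, Z ω)) (a, b, c) := by
  simp only [probOf_eq_sum_ite]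
  have h1 : (∑ a : S, ∑ b : T, ∑ ω, if (X ω, Y ω, Z ω) = (a, b, c) then μ ω else 0)
      = ∑ a : S, ∑ ω, ∑ b : T, (if (X ω, Y ω, Z ω) = (a, b, c) then μ ω else 0) :=
    Finset.sum_congr rfl fun a _ =>
      Finset.sum_comm (f := fun b ω => if (X ω, Y ω, Z ω) = (a, b, c) then μ ω else 0)
  have h2 : (∑ a : S, ∑ ω, ∑ b : T, if (X ω, Y ω, Z ω) = (a, b, c) then μ ω else 0)
      = ∑ ω, ∑ a : S, ∑ b : T, (if (X ω, Y ω, Z ω) = (a, b, c) then μ ω else 0) :=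
    Finset.sum_comm (f := fun a ω => ∑ b : T, if (X ω, Y ω, Z ω) = (a, b, c) then μ ω else 0)
  rw [h1, h2]
  refine Finset.sum_congr rfl fun ω _ => ?_
  by_cases hZ : Z ω = c <;> simp [Prod.ext_iff, hZ, ite_and, Finset.sum_ite_eq]

end Marg

lemma sum3_acb {A B C : Type*} [Fintype A] [Fintype B] [Fintype C] (f : A → B → C → ℝ) :
    ∑ a, ∑ c, ∑ b, f a b c = ∑ a, ∑ b, ∑ c, f a b c :=
  Finset.sum_congr rfl fun a _ => Finset.sum_comm (f := fun c b => f a b c)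

lemma sum3_cab {A B C : Type*} [Fintype A] [Fintype B] [Fintype C] (f : A → B → C → ℝ) :
    ∑ c, ∑ a, ∑ b, f a b c = ∑ a, ∑ b, ∑ c, f a b c := by
  rw [Finset.sum_comm (f := fun c a => ∑ b, f a b c), sum3_acb]

lemma sum3_bca {A B C : Type*} [Fintype A] [Fintype B] [Fintype C] (f : A → B → C → ℝ) :
    ∑ b, ∑ c, ∑ a, f a b c = ∑ a, ∑ b, ∑ c, f a b c := by
  rw [show (∑ b, ∑ c, ∑ a, f a b c) = ∑ b, ∑ a, ∑ c, f a b c from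
    Finset.sum_congr rfl fun b _ => Finset.sum_comm (f := fun c a => f a b c),
    Finset.sum_comm (f := fun b a => ∑ c, f a b c)]

lemma entropy_snd_le (μ : Ω → ℝ) (hμ0 : ∀ ω, 0 ≤ μ ω) {S T : Type*} [Fintype S]
    [DecidableEq S] [Fintype T] [DecidableEq T] (X : Ω → S) (Y : Ω → T) :
    entropy μ Y ≤ entropy μ (fun ω => (X ω, Y ω)) := by
  set q : S → T → ℝ := fun s t => probOf μ (fun ω => (X ω, Y ω)) (s, t) with hq
  have hq0 : ∀ s t, 0 ≤ q s t := fun s t => probOf_nonneg μ hμ0 _ _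
  have hE : entropy μ (fun ω => (X ω, Y ω)) = ∑ s, ∑ t, Real.negMulLog (q s t) := by
    rw [entropy, Fintype.sum_prod_type]
  have hY : entropy μ Y = ∑ t, Real.negMulLog (∑ s, q s t) := by
    rw [entropy]
    exact Finset.sum_congr rfl fun t _ => by rw [marg_snd μ X Y t]
  rw [hE, hY, Finset.sum_comm]
  refine Finset.sum_le_sum fun t _ => ?_
  have hexp : Real.negMulLog (∑ s, q s t)
      = ∑ s, -(q s t * Real.log (∑ s', q s' t)) := by
    rw [Real.negMulLog, neg_mul, Finset.sum_mul, ← Finset.sum_neg_distrib]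
  rw [hexp]
  refine Finset.sum_le_sum fun s _ => ?_
  rw [Real.negMulLog, neg_mul]
  apply neg_le_neg
  rcases eq_or_lt_of_le (hq0 s t) with h0 | hpos
  · simp [← h0]
  · have hle : q s t ≤ ∑ s', q s' t :=
      Finset.single_le_sum (fun s' _ => hq0 s' t) (Finset.mem_univ s)
    exact mul_le_mul_of_nonneg_left (Real.log_le_log hpos hle) (le_of_lt hpos)

lemma key_ineq {A B C : Type*} [Fintype A] [Fintype B] [Fintype C]
    (q : A → B → C → ℝ) (hq : ∀ a b c, 0 ≤ q a b c) :
    (∑ a, ∑ b, ∑ c, Real.negMulLog (q a b c)) + (∑ c, Real.negMulLog (∑ a, ∑ b, q a b c))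
      ≤ (∑ a, ∑ c, Real.negMulLog (∑ b, q a b c))
        + (∑ b, ∑ c, Real.negMulLog (∑ a, q a b c)) := by
  set qAC : A → C → ℝ := fun a c => ∑ b, q a b c with hqAC
  set qBC : B → C → ℝ := fun b c => ∑ a, q a b c with hqBC
  set qC : C → ℝ := fun c => ∑ a, ∑ b, q a b c with hqC
  have hAC0 : ∀ a c, 0 ≤ qAC a c := fun a c => Finset.sum_nonneg fun b _ => hq a b c
  have hBC0 : ∀ b c, 0 ≤ qBC b c := fun b c => Finset.sum_nonneg fun a _ => hq a b c
  have hC0 : ∀ c, 0 ≤ qC c := fun c =>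
    Finset.sum_nonneg fun a _ => Finset.sum_nonneg fun b _ => hq a b c
  have hq_le_AC : ∀ a b c, q a b c ≤ qAC a c := fun a b c =>
    Finset.single_le_sum (fun b' _ => hq a b' c) (Finset.mem_univ b)
  have hq_le_BC : ∀ a b c, q a b c ≤ qBC b c := fun a b c =>
    Finset.single_le_sum (fun a' _ => hq a' b c) (Finset.mem_univ a)
  have hAC_le_C : ∀ a c, qAC a c ≤ qC c := fun a c =>
    Finset.single_le_sum (fun a' _ => hAC0 a' c) (Finset.mem_univ a)
  -- express the two sides as triple sums
  have eC : (∑ c, Real.negMulLog (qC c))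
      = ∑ a, ∑ b, ∑ c, -(q a b c * Real.log (qC c)) := by
    rw [← sum3_cab]
    refine Finset.sum_congr rfl fun c _ => ?_
    rw [Real.negMulLog, neg_mul, hqC]
    rw [Finset.sum_mul, ← Finset.sum_neg_distrib]
    exact Finset.sum_congr rfl fun a _ => by
      rw [Finset.sum_mul, ← Finset.sum_neg_distrib]
  have eAC : (∑ a, ∑ c, Real.negMulLog (qAC a c))
      = ∑ a, ∑ b, ∑ c, -(q a b c * Real.log (qAC a c)) := by
    rw [← sum3_acb]
    refine Finset.sum_congr rfl fun a _ => Finset.sum_congr rfl fun c _ => ?_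
    rw [Real.negMulLog, neg_mul, hqAC, Finset.sum_mul, ← Finset.sum_neg_distrib]
  have eBC : (∑ b, ∑ c, Real.negMulLog (qBC b c))
      = ∑ a, ∑ b, ∑ c, -(q a b c * Real.log (qBC b c)) := by
    rw [← sum3_bca]
    refine Finset.sum_congr rfl fun b _ => Finset.sum_congr rfl fun c _ => ?_
    rw [Real.negMulLog, neg_mul, hqBC, Finset.sum_mul, ← Finset.sum_neg_distrib]
  rw [eC, eAC, eBC]
  -- sum of the correction terms vanishes
  have hsum_q : (∑ a, ∑ b, ∑ c, q a b c) = ∑ c, qC c := by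
    rw [← sum3_cab]
  have e1 : ∀ c, (∑ a, ∑ b, qAC a c * qBC b c / qC c) = qC c := by
    intro c
    have hin : ∀ a, (∑ b, qAC a c * qBC b c / qC c) = qAC a c * (qC c / qC c) := by
      intro a
      have : ∀ b, qAC a c * qBC b c / qC c = qAC a c * (qBC b c / qC c) := fun b => by
        rw [mul_div_assoc]
      rw [Finset.sum_congr rfl fun b _ => this b, ← Finset.mul_sum, ← Finset.sum_div]
      congr 2
      rw [hqC, Finset.sum_comm]
    rw [Finset.sum_congr rfl fun a _ => hin a, ← Finset.sum_mul]
    rcases eq_or_ne (qC c) 0 with h0 | h0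
    · simp [h0]
    · rw [div_self h0, mul_one, hqC]
  have hG : (∑ a, ∑ b, ∑ c, (q a b c - qAC a c * qBC b c / qC c)) = 0 := by
    have : (∑ a, ∑ b, ∑ c, (q a b c - qAC a c * qBC b c / qC c))
        = (∑ a, ∑ b, ∑ c, q a b c) - ∑ a, ∑ b, ∑ c, qAC a c * qBC b c / qC c := by
      simp only [Finset.sum_sub_distrib]
    rw [this, hsum_q, ← sum3_cab (f := fun a b c => qAC a c * qBC b c / qC c)]
    rw [Finset.sum_congr rfl fun c _ => e1 c]
    ring
  -- termwise inequality
  have hterm : ∀ a b c,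
      Real.negMulLog (q a b c) + -(q a b c * Real.log (qC c))
        + (q a b c - qAC a c * qBC b c / qC c)
      ≤ -(q a b c * Real.log (qAC a c)) + -(q a b c * Real.log (qBC b c)) := by
    intro a b c
    rcases eq_or_lt_of_le (hq a b c) with h0 | hpos
    · rw [← h0]
      simp only [Real.negMulLog_zero, zero_mul, neg_zero, add_zero, zero_add, zero_sub,
        mul_zero]
      have : 0 ≤ qAC a c * qBC b c / qC c :=
        div_nonneg (mul_nonneg (hAC0 a c) (hBC0 b c)) (hC0 c)
      linarith
    · have hAC : 0 < qAC a c := lt_of_lt_of_le hpos (hq_le_AC a b c)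
      have hBC : 0 < qBC b c := lt_of_lt_of_le hpos (hq_le_BC a b c)
      have hCpos : 0 < qC c := lt_of_lt_of_le hAC (hAC_le_C a c)
      set x := q a b c * qC c / (qAC a c * qBC b c) with hx
      have hxpos : 0 < x := by positivity
      have hlog : 1 - x⁻¹ ≤ Real.log x := by
        have h := Real.log_le_sub_one_of_pos (inv_pos.mpr hxpos)
        rw [Real.log_inv] at h; linarith
      have hlogx : Real.log x = Real.log (q a b c) + Real.log (qC c)
          - Real.log (qAC a c) - Real.log (qBC b c) := by
        rw [hx, Real.log_div (by positivity) (by positivity),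
          Real.log_mul (ne_of_gt hpos) (ne_of_gt hCpos),
          Real.log_mul (ne_of_gt hAC) (ne_of_gt hBC)]
        ring
      have hxinv : q a b c * x⁻¹ = qAC a c * qBC b c / qC c := by
        rw [hx]
        field_simp
      have h1 : q a b c * (1 - x⁻¹) ≤ q a b c * Real.log x :=
        mul_le_mul_of_nonneg_left hlog hpos.le
      have h2 : q a b c * Real.log x = q a b c * Real.log (q a b c)
          + q a b c * Real.log (qC c) - q a b c * Real.log (qAC a c)
          - q a b c * Real.log (qBC b c) := by rw [hlogx]; ring
      have h3 : q a b c * (1 - x⁻¹) = q a b c - qAC a c * qBC b c / qC c := by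
        rw [mul_sub, mul_one, hxinv]
      rw [Real.negMulLog, neg_mul]
      linarith
  have main : (∑ a, ∑ b, ∑ c, (Real.negMulLog (q a b c) + -(q a b c * Real.log (qC c))
        + (q a b c - qAC a c * qBC b c / qC c)))
      ≤ ∑ a, ∑ b, ∑ c, (-(q a b c * Real.log (qAC a c)) + -(q a b c * Real.log (qBC b c))) :=
    Finset.sum_le_sum fun a _ => Finset.sum_le_sum fun b _ => Finset.sum_le_sum fun c _ =>
      hterm a b c
  simp only [Finset.sum_add_distrib] at main
  rw [hG] at main
  linarith

lemma condMutualInfo_nonneg (μ : Ω → ℝ) (hμ0 : ∀ ω, 0 ≤ μ ω) {S T U : Type*}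
    [Fintype S] [DecidableEq S] [Fintype T] [DecidableEq T] [Fintype U] [DecidableEq U]
    (X : Ω → S) (Y : Ω → T) (Z : Ω → U) : 0 ≤ condMutualInfo μ X Y Z := by
  set q : S → T → U → ℝ := fun a b c => probOf μ (fun ω => (X ω, Y ω, Z ω)) (a, b, c)
    with hqdef
  have hq0 : ∀ a b c, 0 ≤ q a b c := fun a b c => probOf_nonneg μ hμ0 _ _
  have e3 : entropy μ (fun ω => (X ω, Y ω, Z ω))
      = ∑ a, ∑ b, ∑ c, Real.negMulLog (q a b c) := by
    rw [entropy, Fintype.sum_prod_type]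
    exact Finset.sum_congr rfl fun a _ => by rw [Fintype.sum_prod_type]
  have eAC : entropy μ (fun ω => (X ω, Z ω))
      = ∑ a, ∑ c, Real.negMulLog (∑ b, q a b c) := by
    rw [entropy, Fintype.sum_prod_type]
    exact Finset.sum_congr rfl fun a _ => Finset.sum_congr rfl fun c _ => by
      rw [marg_AC μ X Y Z a c]
  have eBC : entropy μ (fun ω => (Y ω, Z ω))
      = ∑ b, ∑ c, Real.negMulLog (∑ a, q a b c) := by
    rw [entropy, Fintype.sum_prod_type]
    exact Finset.sum_congr rfl fun b _ => Finset.sum_congr rfl fun c _ => by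
      rw [marg_BC μ X Y Z b c]
  have eZ : entropy μ Z = ∑ c, Real.negMulLog (∑ a, ∑ b, q a b c) := by
    rw [entropy]
    exact Finset.sum_congr rfl fun c _ => by rw [marg_C μ X Y Z c]
  have := key_ineq q hq0
  rw [condMutualInfo, e3, eAC, eBC, eZ]
  linarith

theorem representation_leakage {P V VH D : Type*} [Fintype P] [DecidableEq P]
    [Fintype V] [DecidableEq V] [Fintype VH] [DecidableEq VH] [Fintype D] [DecidableEq D]
    (μ : Ω → ℝ) (hμ : IsProbMass μ) (p : Ω → P) (v : Ω → V) (d : Ω → D) (g : P → VH)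
    (h : mutualInfo μ v (fun ω => g (p ω)) > condEntropy μ v d) :
    mutualInfo μ p d ≥ mutualInfo μ (fun ω => g (p ω)) d ∧
      mutualInfo μ (fun ω => g (p ω)) d > 0 := by
  obtain ⟨hμ0, -⟩ := hμ
  -- Part 1 : data processing inequality
  have cmi1 : 0 ≤ condMutualInfo μ p d (fun ω => g (p ω)) :=
    condMutualInfo_nonneg μ hμ0 _ _ _
  have r1 : entropy μ (fun ω => (p ω, g (p ω))) = entropy μ p :=
    entropy_comp_inj μ p (fun a => (a, g a)) (fun a b hab => congrArg Prod.fst hab)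
  have r2 : entropy μ (fun ω => (p ω, d ω, g (p ω))) = entropy μ (fun ω => (p ω, d ω)) :=
    entropy_comp_inj μ (fun ω => (p ω, d ω)) (fun x => (x.1, x.2, g x.1)) (by
      intro x y hxy
      simp only [Prod.mk.injEq] at hxy
      exact Prod.ext hxy.1 hxy.2.1)
  have r3 : entropy μ (fun ω => (d ω, g (p ω))) = entropy μ (fun ω => (g (p ω), d ω)) :=
    entropy_comp_inj μ (fun ω => (g (p ω), d ω)) (fun x => (x.2, x.1)) (by
      intro x y hxy
      simp only [Prod.mk.injEq] at hxy
      exact Prod.ext hxy.2 hxy.1)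
  rw [condMutualInfo, r1, r2, r3] at cmi1
  -- Part 2
  have cmi2 : 0 ≤ condMutualInfo μ (fun ω => g (p ω)) d v :=
    condMutualInfo_nonneg μ hμ0 _ _ _
  have s1 : entropy μ (fun ω => (v ω, g (p ω))) = entropy μ (fun ω => (g (p ω), v ω)) :=
    entropy_comp_inj μ (fun ω => (g (p ω), v ω)) (fun x => (x.2, x.1)) (by
      intro x y hxy
      simp only [Prod.mk.injEq] at hxy
      exact Prod.ext hxy.2 hxy.1)
  have s2 : entropy μ (fun ω => (d ω, v ω)) = entropy μ (fun ω => (v ω, d ω)) :=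
    entropy_comp_inj μ (fun ω => (v ω, d ω)) (fun x => (x.2, x.1)) (by
      intro x y hxy
      simp only [Prod.mk.injEq] at hxy
      exact Prod.ext hxy.2 hxy.1)
  have s3 : entropy μ (fun ω => (g (p ω), d ω, v ω))
      = entropy μ (fun ω => (v ω, (g (p ω), d ω))) :=
    entropy_comp_inj μ (fun ω => (v ω, (g (p ω), d ω)))
      (fun x => (x.2.1, (x.2.2, x.1))) (by
      intro x y hxy
      simp only [Prod.mk.injEq] at hxy
      exact Prod.ext hxy.2.2 (Prod.ext hxy.1 hxy.2.1))
  rw [condMutualInfo] at cmi2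
  rw [s2, s3] at cmi2
  have mono : entropy μ (fun ω => (g (p ω), d ω))
      ≤ entropy μ (fun ω => (v ω, (g (p ω), d ω))) :=
    entropy_snd_le μ hμ0 v (fun ω => (g (p ω), d ω))
  rw [mutualInfo, condEntropy] at h
  rw [s1] at h
  constructor
  · simp only [mutualInfo]
    linarith
  · simp only [mutualInfo]
    linarith
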